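/- Let N ≥ 5 and m ≥ 1 be integers. In the quiver Γ^1_{A_{N−3}} of diagonals of a regular N-gon, the sectional paths of length m starting at a diagonal {i,j} are exactly the sequences {i,j}, {i,j+1}, {i,j+2}, …, {i,j+m} and {j,i}, {j,i+1}, {j,i+2}, …, {j,i+m} (indices mod N), in each case provided that every term of the sequence is a diagonal of the N-gon. -/
import Mathlib


/-- A diagonal of the regular `N`-gon with vertices labelled by `ZMod N`:
an unordered pair `{a,b}` with `b ∉ {a-1, a, a+1}`. -/
def IsDiag (N : ℕ) (p : Sym2 (ZMod N)) : Prop :=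
  ∃ a b : ZMod N, p = s(a, b) ∧ b ≠ a ∧ b ≠ a + 1 ∧ b ≠ a - 1

/-- An arrow `D → D'` of the quiver `Γ^1_{A_{N-3}}` of diagonals of the
regular `N`-gon: `D` and `D'` are diagonals, and `D'` is obtained from
`D = {a,b}` by replacing the endpoint `b` by `b+1`. -/
def Arrow1 (N : ℕ) (D D' : Sym2 (ZMod N)) : Prop :=
  IsDiag N D ∧ IsDiag N D' ∧ ∃ a b : ZMod N, D = s(a, b) ∧ D' = s(a, b + 1)

/-- `p 0 → p 1 → ⋯ → p m` is a sectional path in `Γ^1_{A_{N-3}}`: each step is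
an arrow, and `τ_1 (p (s+1)) ≠ p (s-1)` for `0 < s < m`, where
`τ_1 {a,b} = {a-1, b-1}`. -/
def IsSectPath1 (N m : ℕ) (p : Fin (m+1) → Sym2 (ZMod N)) : Prop :=
  (∀ s : Fin m, Arrow1 N (p s.castSucc) (p s.succ)) ∧
  ∀ (s : ℕ) (_ : 1 ≤ s) (h2 : s + 1 ≤ m),
    Sym2.map (fun x => x - 1) (p ⟨s+1, by omega⟩) ≠ p ⟨s-1, by omega⟩

lemma diag_ne {N : ℕ} {x y : ZMod N} (h : IsDiag N s(x, y)) : x ≠ y := by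
  obtain ⟨a, b, hab, h1, -, -⟩ := h
  rw [Sym2.eq_iff] at hab
  rcases hab with ⟨rfl, rfl⟩ | ⟨rfl, rfl⟩
  · exact fun h => h1 h.symm
  · exact h1

lemma step_lemma {N : ℕ} {a c : ZMod N} {D' : Sym2 (ZMod N)}
    (harr : Arrow1 N s(a, c + 1) D')
    (hsec : Sym2.map (fun x => x - 1) D' ≠ s(a, c)) :
    D' = s(a, c + 1 + 1) := by
  obtain ⟨-, -, a', b', hD, hD'⟩ := harr
  rw [Sym2.eq_iff] at hD
  rcases hD with ⟨rfl, rfl⟩ | ⟨rfl, rfl⟩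
  · exact hD'
  · exfalso
    apply hsec
    rw [hD', Sym2.map_pair_eq]
    simp only [add_sub_cancel_right]
    exact Sym2.eq_swap

set_option maxHeartbeats 1000000 in
lemma fwd_pair {N m : ℕ} (hm : 1 ≤ m) (a b : ZMod N)
    (p : Fin (m+1) → Sym2 (ZMod N)) (hsp : IsSectPath1 N m p)
    (h0 : p 0 = s(a, b)) (h1 : p ⟨1, by omega⟩ = s(a, b + 1)) :
    ∀ k (hk : k + 1 ≤ m),
      p ⟨k, by omega⟩ = s(a, b + (k : ZMod N)) ∧
      p ⟨k+1, by omega⟩ = s(a, b + (k : ZMod N) + 1) := by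
  intro k
  induction k with
  | zero =>
    intro hk
    constructor
    · simpa using h0
    · simpa using h1
  | succ k ih =>
    intro hk
    obtain ⟨hpk, hpk1⟩ := ih (by omega)
    have harr := hsp.1 ⟨k + 1, by omega⟩
    have hcs : (Fin.castSucc ⟨k + 1, by omega⟩ : Fin (m+1)) = ⟨k + 1, by omega⟩ := rfl
    have hss : (Fin.succ ⟨k + 1, by omega⟩ : Fin (m+1)) = ⟨k + 2, by omega⟩ := rfl
    rw [hcs, hss, hpk1] at harr
    have hsec := hsp.2 (k + 1) (by omega) (by omega)
    have hsec' : Sym2.map (fun x => x - 1) (p ⟨k+2, by omega⟩) ≠ s(a, b + (k : ZMod N)) := by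
      rw [← hpk]
      exact fun hcon => hsec (by rw [show (⟨k+1-1, by omega⟩ : Fin (m+1)) = ⟨k, by omega⟩ from rfl]; exact hcon)
    clear hsec
    have hstep := step_lemma harr hsec'
    constructor
    · rw [hpk1]
      congr 1
      push_cast
      ring
    · rw [hstep]
      congr 1
      push_cast
      ring

lemma fwd {N m : ℕ} (hm : 1 ≤ m) (a b : ZMod N)
    (p : Fin (m+1) → Sym2 (ZMod N)) (hsp : IsSectPath1 N m p)
    (h0 : p 0 = s(a, b)) (h1 : p ⟨1, by omega⟩ = s(a, b + 1)) :
    ∀ s : Fin (m+1), p s = s(a, b + (s.val : ZMod N)) := by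
  intro s
  obtain ⟨sv, hsv⟩ := s
  rcases lt_or_eq_of_le (Nat.lt_succ_iff.mp hsv) with h | h
  · exact (fwd_pair hm a b p hsp h0 h1 sv h).1
  · have := (fwd_pair hm a b p hsp h0 h1 (sv - 1) (by omega)).2
    have hidx : (⟨sv - 1 + 1, by omega⟩ : Fin (m+1)) = ⟨sv, hsv⟩ := by
      apply Fin.ext; simp; omega
    rw [hidx] at this
    rw [this]
    congr 1
    have h2 : ((sv - 1 : ℕ) : ZMod N) = (sv : ZMod N) - 1 := by
      push_cast [Nat.cast_sub (show 1 ≤ sv by omega)]; ring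
    rw [h2]
    ring

lemma rev {N m : ℕ} (hN : 5 ≤ N) {i j : ZMod N} (p : Fin (m+1) → Sym2 (ZMod N))
    (hp : ∀ s : Fin (m+1), p s = s(i, j + (s.val : ZMod N)))
    (hd : ∀ s, IsDiag N (p s)) : IsSectPath1 N m p := by
  haveI : Fact (1 < N) := ⟨by omega⟩
  constructor
  · intro s
    refine ⟨hd _, hd _, i, j + (s.val : ZMod N), ?_, ?_⟩
    · rw [hp s.castSucc]; rfl
    · rw [hp s.succ]
      congr 1
      simp [Fin.val_succ]
      push_cast
      ring
  · intro s hs1 hs2 heq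
    rw [hp ⟨s+1, by omega⟩, hp ⟨s-1, by omega⟩, Sym2.map_pair_eq] at heq
    simp only at heq
    have hc1 : ((s + 1 : ℕ) : ZMod N) = (s : ZMod N) + 1 := by push_cast; ring
    have hc2 : ((s - 1 : ℕ) : ZMod N) = (s : ZMod N) - 1 := by
      push_cast [Nat.cast_sub hs1]; ring
    rw [hc1, hc2] at heq
    have h1 : j + ((s : ZMod N) + 1) - 1 = j + (s : ZMod N) := by ring
    rw [h1, Sym2.eq_iff] at heq
    have hne : i ≠ j + (s : ZMod N) := by
      have := hd ⟨s, by omega⟩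
      rw [hp ⟨s, by omega⟩] at this
      exact diag_ne this
    rcases heq with ⟨h2, -⟩ | ⟨-, h3⟩
    · exact one_ne_zero (sub_eq_self.mp h2)
    · exact hne h3.symm

/-- The sectional paths of length `m` in `Γ^1_{A_{N-3}}` starting at a
diagonal `{i,j}` are exactly the sequences `{i,j}, {i,j+1}, …, {i,j+m}` and
`{j,i}, {j,i+1}, …, {j,i+m}`, in each case provided every term of the sequence
is a diagonal of the `N`-gon. -/
theorem stmt12 (N m : ℕ) (hN : 5 ≤ N) (hm : 1 ≤ m) (i j : ZMod N)
    (hij : IsDiag N s(i, j))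
    (p : Fin (m+1) → Sym2 (ZMod N)) (h0 : p 0 = s(i, j)) :
    IsSectPath1 N m p ↔
      ((∀ s : Fin (m+1), p s = s(i, j + (s.val : ZMod N))) ∧
        ∀ s, IsDiag N (p s)) ∨
      ((∀ s : Fin (m+1), p s = s(j, i + (s.val : ZMod N))) ∧
        ∀ s, IsDiag N (p s)) := by
  constructor
  · intro hsp
    have hdall : ∀ s : Fin (m+1), IsDiag N (p s) := by
      rintro ⟨sv, hsv⟩
      rcases lt_or_eq_of_le (Nat.lt_succ_iff.mp hsv) with h | h
      · exact (hsp.1 ⟨sv, h⟩).1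
      · have := (hsp.1 ⟨sv - 1, by omega⟩).2.1
        have hidx : (Fin.succ ⟨sv - 1, by omega⟩ : Fin (m+1)) = ⟨sv, hsv⟩ := by
          apply Fin.ext
          simp [Fin.val_succ]
          omega
        rwa [hidx] at this
    have harr0 := hsp.1 ⟨0, by omega⟩
    obtain ⟨-, -, a, b, hD, hD'⟩ := harr0
    have hcs0 : (Fin.castSucc ⟨0, by omega⟩ : Fin (m+1)) = 0 := rfl
    have hss0 : (Fin.succ ⟨0, by omega⟩ : Fin (m+1)) = ⟨1, by omega⟩ := rfl
    rw [hcs0, h0] at hD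
    rw [hss0] at hD'
    rw [Sym2.eq_iff] at hD
    rcases hD with ⟨rfl, rfl⟩ | ⟨rfl, rfl⟩
    · exact Or.inl ⟨fwd hm i j p hsp h0 hD', hdall⟩
    · refine Or.inr ⟨fwd hm j i p hsp ?_ hD', hdall⟩
      rw [h0]; exact Sym2.eq_swap
  · rintro (⟨hp, hd⟩ | ⟨hp, hd⟩)
    · exact rev hN p hp hd
    · exact rev hN p hp hd
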